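/- Let 0 < q < ∞, 0 < p < ∞, and define s implicitly via the appearing norms; let u ∈ C(0,∞) be a weight and v, w weights with 0 < V(x) = ∫₀ˣ v < ∞ and 0 < W_*(x) = ∫_x^∞ w < ∞ for all x > 0. Then the inequality ‖S_u f‖_{L^q(w)} ≤ c ‖f‖_{L^p(v)} for all non-increasing f ∈ 𝔐⁺ holds if and only if both: (a) the inequality ‖S_{u^p}(∫_·^∞ h)‖_{L^{q/p}(w)} ≤ c^p ‖h‖_{L^1(V)} holds for all h ∈ 𝔐⁺, and (b) ‖S_u 𝟏‖_{L^q(w)} ≤ c ‖𝟏‖_{L^p(v)}, where 𝟏 is the constant function 1. -/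

import Mathlib

open MeasureTheory Set Filter
open scoped ENNReal

namespace Stmt5Aux

variable {α : Type*} {m : MeasurableSpace α} {μ : Measure α}

lemma essSup_rpow_le (μ : Measure α) (f : α → ℝ≥0∞) {e : ℝ} (he : 0 ≤ e) :
    essSup (fun x => f x ^ e) μ ≤ (essSup f μ) ^ e := by
  refine essSup_le_of_ae_le _ ?_
  filter_upwards [ENNReal.ae_le_essSup f] with x hx
  exact ENNReal.rpow_le_rpow hx he

lemma essSup_rpow (μ : Measure α) (f : α → ℝ≥0∞) {e : ℝ} (he : 0 < e) :
    essSup (fun x => f x ^ e) μ = (essSup f μ) ^ e := by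
  refine le_antisymm (essSup_rpow_le μ f he.le) ?_
  have h2 := essSup_rpow_le μ (fun x => f x ^ e) (e := e⁻¹) (by positivity)
  have hfe : (fun x => (f x ^ e) ^ e⁻¹) = f := by
    funext x; rw [← ENNReal.rpow_mul, mul_inv_cancel₀ he.ne', ENNReal.rpow_one]
  rw [hfe] at h2
  calc (essSup f μ) ^ e ≤ ((essSup (fun x => f x ^ e) μ) ^ e⁻¹) ^ e :=
        ENNReal.rpow_le_rpow h2 he.le
    _ = _ := by rw [← ENNReal.rpow_mul, inv_mul_cancel₀ he.ne', ENNReal.rpow_one]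

lemma essSup_add_le (μ : Measure α) (f g : α → ℝ≥0∞) :
    essSup (fun x => f x + g x) μ ≤ essSup f μ + essSup g μ := by
  refine essSup_le_of_ae_le _ ?_
  filter_upwards [ENNReal.ae_le_essSup f, ENNReal.ae_le_essSup g] with x h1 h2
  exact add_le_add h1 h2

lemma essSup_iSup_le (μ : Measure α) (F : ℕ → α → ℝ≥0∞) :
    essSup (fun x => ⨆ n, F n x) μ ≤ ⨆ n, essSup (F n) μ := by
  refine essSup_le_of_ae_le _ ?_
  have h : ∀ᵐ x ∂μ, ∀ n, F n x ≤ essSup (F n) μ := ae_all_iff.2 fun n => ENNReal.ae_le_essSup (F n)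
  filter_upwards [h] with x hx
  exact iSup_le fun n => (hx n).trans (le_iSup (fun n => essSup (F n) μ) n)

lemma rpow_add_le (a b : ℝ≥0∞) {r : ℝ} (hr : 0 ≤ r) :
    (a + b) ^ r ≤ 2 ^ r * (a ^ r + b ^ r) := by
  have h1 : a + b ≤ 2 * (a ⊔ b) := by
    rw [two_mul]; exact add_le_add le_sup_left le_sup_right
  calc (a + b) ^ r ≤ (2 * (a ⊔ b)) ^ r := ENNReal.rpow_le_rpow h1 hr
    _ = 2 ^ r * (a ⊔ b) ^ r := ENNReal.mul_rpow_of_nonneg _ _ hr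
    _ ≤ 2 ^ r * (a ^ r + b ^ r) := by
        gcongr
        rcases le_total a b with h | h
        · rw [sup_eq_right.2 h]; exact le_add_self
        · rw [sup_eq_left.2 h]; exact self_le_add_right _ _

lemma iSup_rpow (F : ℕ → ℝ≥0∞) {r : ℝ} (hr : 0 < r) :
    (⨆ n, F n) ^ r = ⨆ n, (F n) ^ r := by
  apply le_antisymm
  · have h : ∀ n, F n ≤ (⨆ n, F n ^ r) ^ r⁻¹ := fun n => by
      calc F n = (F n ^ r) ^ r⁻¹ := by
            rw [← ENNReal.rpow_mul, mul_inv_cancel₀ hr.ne', ENNReal.rpow_one]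
        _ ≤ _ := ENNReal.rpow_le_rpow (le_iSup (fun n => F n ^ r) n) (by positivity)
    calc (⨆ n, F n) ^ r ≤ (((⨆ n, F n ^ r)) ^ r⁻¹) ^ r := ENNReal.rpow_le_rpow (iSup_le h) hr.le
      _ = _ := by rw [← ENNReal.rpow_mul, inv_mul_cancel₀ hr.ne', ENNReal.rpow_one]
  · exact iSup_le fun n => ENNReal.rpow_le_rpow (le_iSup F n) hr.le

lemma monotone_essSup_Ioc (F : ℝ → ℝ≥0∞) :
    Monotone fun t : ℝ => essSup F (volume.restrict (Ioc (0:ℝ) t)) := by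
  intro t1 t2 h
  exact essSup_mono_measure' (Measure.restrict_mono (Ioc_subset_Ioc_right h) le_rfl)

lemma tonelli_VT (v h : ℝ → ℝ≥0∞) (hv : Measurable v) (hh : Measurable h) :
    (∫⁻ t in Ioi (0:ℝ), v t * ∫⁻ s in Ioi t, h s)
      = ∫⁻ s in Ioi (0:ℝ), h s * ∫⁻ r in Ioc 0 s, v r := by
  classical
  set F : ℝ → ℝ → ℝ≥0∞ := fun t s => if t < s then v t * h s else 0 with hF
  have hFm : Measurable (Function.uncurry F) := by
    apply Measurable.ite (measurableSet_lt measurable_fst measurable_snd)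
    · exact (hv.comp measurable_fst).mul (hh.comp measurable_snd)
    · exact measurable_const
  have step1 : ∀ t : ℝ, (∫⁻ s, F t s) = v t * ∫⁻ s in Ioi t, h s := by
    intro t
    have : F t = (Ioi t).indicator (fun s => v t * h s) := by
      funext s
      by_cases hts : t < s <;> simp [hF, hts, Set.indicator_apply, Set.mem_Ioi]
    rw [this, lintegral_indicator measurableSet_Ioi, lintegral_const_mul _ hh]
  have step2 : ∀ s : ℝ, (∫⁻ t in Ioi (0:ℝ), F t s) = (∫⁻ r in Ioo 0 s, v r) * h s := by
    intro s
    have : (fun t => F t s) = (Iio s).indicator (fun t => v t * h s) := by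
      funext t
      by_cases hts : t < s <;> simp [hF, hts, Set.indicator_apply, Set.mem_Iio]
    rw [this, lintegral_indicator measurableSet_Iio, Measure.restrict_restrict measurableSet_Iio,
      Set.Iio_inter_Ioi, lintegral_mul_const _ hv]
  have swap : (∫⁻ t in Ioi (0:ℝ), ∫⁻ s, F t s) = ∫⁻ s, ∫⁻ t in Ioi (0:ℝ), F t s :=
    lintegral_lintegral_swap hFm.aemeasurable
  calc (∫⁻ t in Ioi (0:ℝ), v t * ∫⁻ s in Ioi t, h s)
      = ∫⁻ t in Ioi (0:ℝ), ∫⁻ s, F t s := by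
        refine lintegral_congr fun t => (step1 t).symm
    _ = ∫⁻ s, ∫⁻ t in Ioi (0:ℝ), F t s := swap
    _ = ∫⁻ s, (Ioi (0:ℝ)).indicator (fun s => (∫⁻ r in Ioo 0 s, v r) * h s) s := by
        refine lintegral_congr fun s => ?_
        rw [step2 s]
        by_cases hs : s ∈ Ioi (0:ℝ)
        · rw [Set.indicator_of_mem hs]
        · rw [Set.indicator_of_notMem hs,
            Set.Ioo_eq_empty hs, setLIntegral_empty, zero_mul]
    _ = ∫⁻ s in Ioi (0:ℝ), (∫⁻ r in Ioo 0 s, v r) * h s :=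
        lintegral_indicator measurableSet_Ioi _
    _ = ∫⁻ s in Ioi (0:ℝ), h s * ∫⁻ r in Ioc 0 s, v r := by
        refine setLIntegral_congr_fun measurableSet_Ioi (fun s hs => ?_)
        rw [setLIntegral_congr (Ioo_ae_eq_Ioc (a := (0:ℝ)) (b := s)), mul_comm]


section core

variable {g : ℝ → ℝ≥0∞}

/-- bound of a set integral of `g` by value at left end -/
lemma Ioc_int_le (hganti : AntitoneOn g (Ioi (0:ℝ))) (a b : ℝ) (ha : 0 < a) :
    (∫⁻ s in Ioc a b, g s) ≤ g a * ENNReal.ofReal (b - a) := by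
  calc (∫⁻ s in Ioc a b, g s) ≤ ∫⁻ _ in Ioc a b, g a := by
        refine setLIntegral_mono measurable_const fun x hx => ?_
        exact hganti (mem_Ioi.2 ha) (mem_Ioi.2 (ha.trans hx.1)) hx.1.le
    _ = g a * volume (Ioc a b) := setLIntegral_const _ _
    _ = g a * ENNReal.ofReal (b - a) := by rw [Real.volume_Ioc]

lemma Ioc_int_ge (hg : Measurable g) (hganti : AntitoneOn g (Ioi (0:ℝ))) (a b : ℝ) (ha : 0 < a) (hab : a ≤ b) :
    g b * ENNReal.ofReal (b - a) ≤ ∫⁻ s in Ioc a b, g s := by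
  calc g b * ENNReal.ofReal (b - a) = ∫⁻ _ in Ioc a b, g b := by
        rw [setLIntegral_const _ _, Real.volume_Ioc]
    _ ≤ ∫⁻ s in Ioc a b, g s := by
        refine setLIntegral_mono hg fun x hx => ?_
        exact hganti (mem_Ioi.2 (ha.trans hx.1)) (mem_Ioi.2 (ha.trans_le hab)) hx.2

lemma keyId (hg : Measurable g) (hganti : AntitoneOn g (Ioi (0:ℝ)))
    (gfin : ∀ r : ℝ, 0 < r → g r ≠ ⊤) {ε r R : ℝ} (hε : 0 < ε) (hr : 0 < r) (hrR : r ≤ R) :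
    (∫⁻ s in Ioc r R, (g s - g (s + ε))) + ∫⁻ s in Ioc R (R + ε), g s
      = ∫⁻ s in Ioc r (r + ε), g s := by
  have hRpos : 0 < R := hr.trans_le hrR
  have hshift : (∫⁻ s in Ioc r R, g (s + ε)) = ∫⁻ s in Ioc (r + ε) (R + ε), g s := by
    have h1 := (measurePreserving_add_right volume ε).setLIntegral_comp_preimage_emb
      (measurableEmbedding_addRight ε) g (Ioc (r + ε) (R + ε))
    have h2 : (fun x => x + ε) ⁻¹' Ioc (r + ε) (R + ε) = Ioc r R := by
      rw [preimage_add_const_Ioc, add_sub_cancel_right, add_sub_cancel_right]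
    rw [← h1, h2]
  have hsplit : (∫⁻ s in Ioc r R, (g s - g (s + ε))) + ∫⁻ s in Ioc (r + ε) (R + ε), g s
      = ∫⁻ s in Ioc r R, g s := by
    have hmeas : Measurable fun s : ℝ => g (s + ε) := hg.comp (measurable_add_const ε)
    rw [← hshift, ← lintegral_add_right _ hmeas]
    refine setLIntegral_congr_fun measurableSet_Ioc (fun s hs => ?_)
    exact tsub_add_cancel_of_le (hganti (mem_Ioi.2 (hr.trans hs.1))
      (mem_Ioi.2 ((hr.trans hs.1).trans (lt_add_of_pos_right _ hε))) (le_add_of_nonneg_right hε.le))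
  have hu1 : (∫⁻ s in Ioc r R, g s) + ∫⁻ s in Ioc R (R + ε), g s = ∫⁻ s in Ioc r (R + ε), g s := by
    rw [← lintegral_union measurableSet_Ioc (Ioc_disjoint_Ioc_of_le le_rfl),
      Ioc_union_Ioc_eq_Ioc hrR (le_add_of_nonneg_right hε.le)]
  have hu2 : (∫⁻ s in Ioc r (r + ε), g s) + ∫⁻ s in Ioc (r + ε) (R + ε), g s
      = ∫⁻ s in Ioc r (R + ε), g s := by
    rw [← lintegral_union measurableSet_Ioc (Ioc_disjoint_Ioc_of_le le_rfl),
      Ioc_union_Ioc_eq_Ioc (le_add_of_nonneg_right hε.le) (by linarith)]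
  -- cancel the common finite term  ∫_{Ioc (r+ε) (R+ε)} g
  have hfin2 : (∫⁻ s in Ioc (r + ε) (R + ε), g s) ≠ ⊤ := by
    refine ne_of_lt (lt_of_le_of_lt (Ioc_int_le hganti (r + ε) (R + ε) (by linarith)) ?_)
    exact ENNReal.mul_lt_top (Ne.lt_top (gfin _ (by linarith))) ENNReal.ofReal_lt_top
  -- (X + B) = I(r,R) ; I(r,R) + I(R,R+ε) = I(r,R+ε) ; I(r,r+ε) + B = I(r,R+ε)
  have hcomb : ((∫⁻ s in Ioc r R, (g s - g (s + ε))) + ∫⁻ s in Ioc R (R + ε), g s)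
        + ∫⁻ s in Ioc (r + ε) (R + ε), g s
      = (∫⁻ s in Ioc r (r + ε), g s) + ∫⁻ s in Ioc (r + ε) (R + ε), g s := by
    calc ((∫⁻ s in Ioc r R, (g s - g (s + ε))) + ∫⁻ s in Ioc R (R + ε), g s)
          + ∫⁻ s in Ioc (r + ε) (R + ε), g s
        = ((∫⁻ s in Ioc r R, (g s - g (s + ε))) + ∫⁻ s in Ioc (r + ε) (R + ε), g s)
          + ∫⁻ s in Ioc R (R + ε), g s := by ring
      _ = (∫⁻ s in Ioc r R, g s) + ∫⁻ s in Ioc R (R + ε), g s := by rw [hsplit]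
      _ = ∫⁻ s in Ioc r (R + ε), g s := hu1
      _ = (∫⁻ s in Ioc r (r + ε), g s) + ∫⁻ s in Ioc (r + ε) (R + ε), g s := hu2.symm
  exact (ENNReal.add_left_inj hfin2).1 hcomb

end core

end Stmt5Aux

namespace Stmt5Aux
section tails
open scoped ENNReal
open MeasureTheory Set

variable {g : ℝ → ℝ≥0∞}

lemma tail_eq_iSup (h : ℝ → ℝ≥0∞) (hm : Measurable h) (r : ℝ) :
    (∫⁻ s in Ioi r, h s) = ⨆ k : ℕ, ∫⁻ s in Ioc r (r + (k + 1)), h s := by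
  have hU : Ioi r = ⋃ k : ℕ, Ioc r (r + (k + 1)) := by
    ext x
    simp only [mem_Ioi, mem_iUnion, mem_Ioc]
    constructor
    · intro hx
      obtain ⟨k, hk⟩ := exists_nat_ge (x - r)
      exact ⟨k, hx, by linarith⟩
    · rintro ⟨k, hk, -⟩; exact hk
  have hmono : Monotone fun k : ℕ => Ioc r (r + (k + 1)) := by
    intro a b hab
    have : (a:ℝ) ≤ b := Nat.cast_le.2 hab
    exact Ioc_subset_Ioc_right (by linarith)
  have happ : ∀ s : Set ℝ, MeasurableSet s → (volume.withDensity h) s = ∫⁻ x in s, h x :=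
    fun s hs => withDensity_apply h hs
  rw [← happ _ measurableSet_Ioi, hU, Directed.measure_iUnion hmono.directed_le]
  exact iSup_congr fun k => happ _ measurableSet_Ioc

lemma tail_upper (hg : Measurable g) (hganti : AntitoneOn g (Ioi (0:ℝ)))
    (gfin : ∀ r : ℝ, 0 < r → g r ≠ ⊤) {ε r : ℝ} (hε : 0 < ε) (hr : 0 < r) :
    (∫⁻ s in Ioi r, (ENNReal.ofReal ε)⁻¹ * (g s - g (s + ε))) ≤ g r := by
  have hsub : Measurable fun s => g s - g (s + ε) := hg.sub (hg.comp (measurable_add_const ε))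
  rw [lintegral_const_mul _ hsub, tail_eq_iSup _ hsub r, ENNReal.mul_iSup]
  refine iSup_le fun k => ?_
  have hkey := keyId hg hganti gfin hε hr (by linarith [Nat.cast_nonneg (α := ℝ) k] : r ≤ r + ((k:ℝ) + 1))
  have hX : (∫⁻ s in Ioc r (r + ((k:ℝ)+1)), (g s - g (s+ε))) ≤ ∫⁻ s in Ioc r (r+ε), g s := by
    rw [← hkey]; exact le_self_add
  calc (ENNReal.ofReal ε)⁻¹ * ∫⁻ s in Ioc r (r + ((k:ℝ) + 1)), (g s - g (s+ε))
      ≤ (ENNReal.ofReal ε)⁻¹ * (g r * ENNReal.ofReal ((r+ε) - r)) := by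
        gcongr
        exact hX.trans (Ioc_int_le hganti r (r+ε) hr)
    _ = g r := by
        rw [add_sub_cancel_left, mul_comm, mul_assoc,
          ENNReal.mul_inv_cancel (ENNReal.ofReal_pos.2 hε).ne' ENNReal.ofReal_ne_top, mul_one]

lemma tail_lower (hg : Measurable g) (hganti : AntitoneOn g (Ioi (0:ℝ)))
    (gfin : ∀ r : ℝ, 0 < r → g r ≠ ⊤) {ε r : ℝ} (hε : 0 < ε) (hr : 0 < r) :
    g (r + ε) ≤ (∫⁻ s in Ioi r, (ENNReal.ofReal ε)⁻¹ * (g s - g (s + ε)))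
      + ⨅ k : ℕ, g ((k:ℝ) + 1) := by
  rw [ENNReal.add_iInf]
  refine le_iInf fun k => ?_
  set T := ∫⁻ s in Ioi r, (ENNReal.ofReal ε)⁻¹ * (g s - g (s + ε)) with hT
  set R := max r ((k:ℝ)+1) with hR
  have hRpos : 0 < R := lt_of_lt_of_le hr (le_max_left _ _)
  have hk1 : (0:ℝ) < (k:ℝ) + 1 := by positivity
  have hgR : g R ≤ g ((k:ℝ)+1) :=
    hganti (mem_Ioi.2 hk1) (mem_Ioi.2 hRpos) (le_max_right _ _)
  refine le_trans ?_ (add_le_add le_rfl hgR)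
  have hkey := keyId hg hganti gfin hε hr (le_max_left r ((k:ℝ)+1))
  set e := ENNReal.ofReal ε with he
  have he0 : e ≠ 0 := (ENNReal.ofReal_pos.2 hε).ne'
  have het : e ≠ ⊤ := ENNReal.ofReal_ne_top
  have h1 : g (r+ε) * e ≤ (∫⁻ s in Ioc r R, (g s - g (s+ε))) + g R * e := by
    calc g (r+ε) * e = g (r+ε) * ENNReal.ofReal ((r+ε)-r) := by rw [add_sub_cancel_left]
      _ ≤ ∫⁻ s in Ioc r (r+ε), g s := Ioc_int_ge hg hganti r (r+ε) hr (by linarith)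
      _ = (∫⁻ s in Ioc r R, (g s - g (s+ε))) + ∫⁻ s in Ioc R (R+ε), g s := hkey.symm
      _ ≤ (∫⁻ s in Ioc r R, (g s - g (s+ε))) + g R * ENNReal.ofReal ((R+ε)-R) := by
          gcongr
          exact Ioc_int_le hganti R (R+ε) hRpos
      _ = (∫⁻ s in Ioc r R, (g s - g (s+ε))) + g R * e := by rw [add_sub_cancel_left]
  have hsub : Measurable fun s => g s - g (s + ε) := hg.sub (hg.comp (measurable_add_const ε))
  have hl : ∀ x : ℝ≥0∞, e⁻¹ * (x * e) = x := fun x => by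
    rw [mul_comm x e, ← mul_assoc, ENNReal.inv_mul_cancel he0 het, one_mul]
  have h2 : g (r+ε) ≤ e⁻¹ * (∫⁻ s in Ioc r R, (g s - g (s+ε))) + g R :=
    calc g (r+ε) = e⁻¹ * (g (r+ε) * e) := (hl _).symm
      _ ≤ e⁻¹ * ((∫⁻ s in Ioc r R, (g s - g (s+ε))) + g R * e) := mul_le_mul_right h1 e⁻¹
      _ = e⁻¹ * (∫⁻ s in Ioc r R, (g s - g (s+ε))) + e⁻¹ * (g R * e) := mul_add _ _ _
      _ = e⁻¹ * (∫⁻ s in Ioc r R, (g s - g (s+ε))) + g R := by rw [hl]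
  have h3 : e⁻¹ * (∫⁻ s in Ioc r R, (g s - g (s+ε))) ≤ T := by
    rw [← lintegral_const_mul _ hsub]
    exact lintegral_mono_set Ioc_subset_Ioi_self
  exact h2.trans (add_le_add h3 le_rfl)

end tails
end Stmt5Aux

namespace Stmt5Aux
section countable
open scoped ENNReal
open MeasureTheory Set

variable {g : ℝ → ℝ≥0∞}

lemma countable_bad (hganti : AntitoneOn g (Ioi (0:ℝ))) :
    Set.Countable {τ : ℝ | 0 < τ ∧ (⨆ n : ℕ, g (τ + 1 / ((n:ℝ) + 1))) < g τ} := by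
  set rf : ℝ → ℝ≥0∞ := fun τ => ⨆ n : ℕ, g (τ + 1 / ((n:ℝ) + 1)) with hrf
  set D := {τ : ℝ | 0 < τ ∧ rf τ < g τ} with hD
  have key : ∀ τ1 ∈ D, ∀ τ2 ∈ D, τ1 < τ2 → g τ2 ≤ rf τ1 := by
    intro τ1 h1 τ2 h2 hlt
    obtain ⟨n, hn⟩ := exists_nat_ge (τ2 - τ1)⁻¹
    have hpos : (0:ℝ) < τ2 - τ1 := by linarith
    have hεle : 1 / ((n:ℝ) + 1) ≤ τ2 - τ1 := by
      rw [div_le_iff₀ (by positivity)]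
      have h3 : (τ2 - τ1)⁻¹ ≤ (n:ℝ) + 1 := le_trans hn (by linarith)
      calc (1:ℝ) = (τ2 - τ1) * (τ2 - τ1)⁻¹ := (mul_inv_cancel₀ hpos.ne').symm
        _ ≤ (τ2 - τ1) * ((n:ℝ) + 1) := by gcongr
    have h1pos : (0:ℝ) < τ1 := h1.1
    refine le_trans (hganti ?_ ?_ ?_) (le_iSup (fun n : ℕ => g (τ1 + 1 / ((n:ℝ) + 1))) n)
    · exact mem_Ioi.2 (by positivity)
    · exact mem_Ioi.2 h2.1
    · linarith
  have hdisj : D.PairwiseDisjoint (fun τ => Ioo (rf τ) (g τ)) := by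
    intro τ1 h1 τ2 h2 hne
    rcases lt_or_gt_of_ne hne with hlt | hlt
    · refine Set.disjoint_left.2 fun x hx1 hx2 => ?_
      exact absurd (lt_of_lt_of_le hx2.2 (key τ1 h1 τ2 h2 hlt)) (not_lt.2 hx1.1.le)
    · refine Set.disjoint_left.2 fun x hx1 hx2 => ?_
      exact absurd (lt_of_lt_of_le hx1.2 (key τ2 h2 τ1 h1 hlt)) (not_lt.2 hx2.1.le)
  exact hdisj.countable_of_isOpen (fun τ _ => isOpen_Ioo) (fun τ hτ => nonempty_Ioo.2 hτ.2)

end countable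
end Stmt5Aux
open Stmt5Aux

open MeasureTheory Set
open scoped ENNReal

/-- `‖S_u f‖_{L^q(w)} ≤ c ‖f‖_{L^p(v)}` for all non-increasing `f ∈ 𝔐⁺`. -/
def MainIneq5 (p q : ℝ) (u v w : ℝ → ℝ≥0∞) (c : ℝ≥0∞) : Prop :=
  ∀ f : ℝ → ℝ≥0∞, Measurable f → AntitoneOn f (Ioi (0 : ℝ)) →
    (∫⁻ t in Ioi (0 : ℝ),
        (essSup (fun τ => u τ * f τ) (volume.restrict (Ioc 0 t))) ^ q * w t) ^ (1 / q)
      ≤ c * (∫⁻ t in Ioi (0 : ℝ), (f t) ^ p * v t) ^ (1 / p)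

/-- `‖S_{u^p}(∫_·^∞ h)‖_{L^{q/p}(w)} ≤ c^p ‖h‖_{L^1(V)}` for all `h ∈ 𝔐⁺`. -/
def RedIneq5 (p q : ℝ) (u v w : ℝ → ℝ≥0∞) (c : ℝ≥0∞) : Prop :=
  ∀ h : ℝ → ℝ≥0∞, Measurable h →
    (∫⁻ t in Ioi (0 : ℝ),
        (essSup (fun τ => (u τ) ^ p * ∫⁻ s in Ioi τ, h s)
          (volume.restrict (Ioc 0 t))) ^ (q / p) * w t) ^ (p / q)
      ≤ c ^ p * ∫⁻ t in Ioi (0 : ℝ), h t * ∫⁻ s in Ioc 0 t, v s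

/-- `‖S_u 𝟏‖_{L^q(w)} ≤ c ‖𝟏‖_{L^p(v)}`. -/
def OneIneq5 (p q : ℝ) (u v w : ℝ → ℝ≥0∞) (c : ℝ≥0∞) : Prop :=
  (∫⁻ t in Ioi (0 : ℝ), (essSup u (volume.restrict (Ioc 0 t))) ^ q * w t) ^ (1 / q)
    ≤ c * (∫⁻ t in Ioi (0 : ℝ), v t) ^ (1 / p)

theorem stmt_5 (p q : ℝ) (hp : 0 < p) (hq : 0 < q)
    (u v w : ℝ → ℝ≥0∞) (hu : Measurable u) (hv : Measurable v) (hw : Measurable w)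
    (hucont : ContinuousOn u (Ioi (0 : ℝ)))
    (hV : ∀ x : ℝ, 0 < x → 0 < (∫⁻ s in Ioc 0 x, v s) ∧ (∫⁻ s in Ioc 0 x, v s) < ⊤)
    (hW : ∀ x : ℝ, 0 < x → 0 < (∫⁻ s in Ioi x, w s) ∧ (∫⁻ s in Ioi x, w s) < ⊤) :
    ∃ C : ℝ≥0∞, 0 < C ∧ C < ⊤ ∧
      ∀ c : ℝ≥0∞,
        (MainIneq5 p q u v w c →
          RedIneq5 p q u v w (C * c) ∧ OneIneq5 p q u v w (C * c)) ∧
        (RedIneq5 p q u v w c → OneIneq5 p q u v w c →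
          MainIneq5 p q u v w (C * c)) := by
  classical
  have hp0 : p ≠ 0 := hp.ne'
  have hq0 : q ≠ 0 := hq.ne'
  refine ⟨2 ^ (1/p + 1/q), ENNReal.rpow_pos (by norm_num) (by norm_num),
    ENNReal.rpow_lt_top_of_nonneg (by positivity) (by norm_num), fun c => ?_⟩
  have hC1 : (1:ℝ≥0∞) ≤ 2 ^ (1/p + 1/q) := by
    calc (1:ℝ≥0∞) = 2 ^ (0:ℝ) := (ENNReal.rpow_zero (x := 2)).symm
      _ ≤ 2 ^ (1/p + 1/q) := ENNReal.rpow_le_rpow_of_exponent_le (by norm_num) (by positivity)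
  have hcC : c ≤ 2 ^ (1/p + 1/q) * c := le_mul_of_one_le_left zero_le hC1
  constructor
  · -- forward direction
    intro hMain
    constructor
    · -- Reduced inequality
      intro h hh
      set T : ℝ → ℝ≥0∞ := fun τ => ∫⁻ s in Ioi τ, h s with hTdef
      have hTanti : Antitone T := fun a b hab => lintegral_mono_set (Ioi_subset_Ioi hab)
      set f : ℝ → ℝ≥0∞ := fun τ => T τ ^ (1/p) with hfdef
      have hfm : Measurable f := hTanti.measurable.pow measurable_const
      have hfa : AntitoneOn f (Ioi (0:ℝ)) := fun a _ b _ hab =>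
        ENNReal.rpow_le_rpow (hTanti hab) (by positivity)
      have hmain := hMain f hfm hfa
      have hfp : ∀ τ, f τ ^ p = T τ := fun τ => by
        rw [hfdef, ← ENNReal.rpow_mul, one_div, inv_mul_cancel₀ hp0, ENNReal.rpow_one]
      have hess : ∀ t : ℝ, essSup (fun τ => u τ ^ p * T τ) (volume.restrict (Ioc 0 t))
          = (essSup (fun τ => u τ * f τ) (volume.restrict (Ioc 0 t))) ^ p := by
        intro t
        rw [← essSup_rpow (volume.restrict (Ioc 0 t)) (fun τ => u τ * f τ) hp]
        congr 1
        funext τ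
        rw [ENNReal.mul_rpow_of_nonneg _ _ hp.le, hfp τ]
      have hVT : (∫⁻ t in Ioi (0:ℝ), f t ^ p * v t)
          = ∫⁻ t in Ioi (0:ℝ), h t * ∫⁻ s in Ioc 0 t, v s := by
        rw [← tonelli_VT v h hv hh]
        exact lintegral_congr fun t => by rw [hfp t, mul_comm]
      calc (∫⁻ t in Ioi (0:ℝ),
              (essSup (fun τ => u τ ^ p * ∫⁻ s in Ioi τ, h s)
                (volume.restrict (Ioc 0 t))) ^ (q/p) * w t) ^ (p/q)
          = (∫⁻ t in Ioi (0:ℝ),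
              (essSup (fun τ => u τ * f τ) (volume.restrict (Ioc 0 t))) ^ q * w t) ^ (p/q) := by
            congr 1
            refine lintegral_congr fun t => ?_
            rw [hess t, ← ENNReal.rpow_mul]
            congr 2
            field_simp
        _ = ((∫⁻ t in Ioi (0:ℝ),
              (essSup (fun τ => u τ * f τ) (volume.restrict (Ioc 0 t))) ^ q * w t) ^ (1/q)) ^ p := by
            rw [← ENNReal.rpow_mul]
            congr 1
            field_simp
        _ ≤ (c * (∫⁻ t in Ioi (0:ℝ), f t ^ p * v t) ^ (1/p)) ^ p :=
            ENNReal.rpow_le_rpow hmain hp.le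
        _ = c ^ p * ((∫⁻ t in Ioi (0:ℝ), f t ^ p * v t) ^ (1/p)) ^ p :=
            ENNReal.mul_rpow_of_nonneg _ _ hp.le
        _ = c ^ p * ∫⁻ t in Ioi (0:ℝ), h t * ∫⁻ s in Ioc 0 t, v s := by
            rw [← ENNReal.rpow_mul, one_div, inv_mul_cancel₀ hp0, ENNReal.rpow_one, hVT]
        _ ≤ (2 ^ (1/p + 1/q) * c) ^ p * ∫⁻ t in Ioi (0:ℝ), h t * ∫⁻ s in Ioc 0 t, v s :=
            mul_le_mul_left (ENNReal.rpow_le_rpow hcC hp.le) _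
    · -- One inequality
      have h1 := hMain (fun _ => 1) measurable_const (antitoneOn_const)
      simp only [mul_one, ENNReal.one_rpow, one_mul] at h1
      exact h1.trans (mul_le_mul_left hcC _)
  · -- reverse direction
    intro hRed hOne f hf hfa
    set S : ℝ → ℝ≥0∞ := fun t => essSup (fun τ => u τ * f τ) (volume.restrict (Ioc 0 t)) with hS
    by_cases hc0 : c = 0
    · -- the constant is zero: then u vanishes a.e. where w is positive
      subst hc0
      have hOne' : ((∫⁻ t in Ioi (0:ℝ),
          (essSup u (volume.restrict (Ioc 0 t))) ^ q * w t) ^ (1/q) : ℝ≥0∞)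
          ≤ 0 * (∫⁻ t in Ioi (0:ℝ), v t) ^ (1/p) := hOne
      rw [zero_mul] at hOne'
      have h00 : ((∫⁻ t in Ioi (0:ℝ),
          (essSup u (volume.restrict (Ioc 0 t))) ^ q * w t) ^ (1/q) : ℝ≥0∞) = 0 :=
        le_antisymm hOne' zero_le
      have h0 : (∫⁻ t in Ioi (0:ℝ), (essSup u (volume.restrict (Ioc 0 t))) ^ q * w t) = 0 := by
        rcases ENNReal.rpow_eq_zero_iff.1 h00 with ⟨h, _⟩ | ⟨_, hlt⟩
        · exact h
        · exfalso; have : (0:ℝ) < 1/q := by positivity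
          linarith
      have hmeas : Measurable fun t => (essSup u (volume.restrict (Ioc 0 t))) ^ q * w t :=
        ((monotone_essSup_Ioc u).measurable.pow measurable_const).mul hw
      have hae := (lintegral_eq_zero_iff hmeas).1 h0
      have hzero : ∀ᵐ t ∂(volume.restrict (Ioi (0:ℝ))), S t ^ q * w t = 0 := by
        filter_upwards [hae] with t ht
        rcases mul_eq_zero.1 ht with h | h
        · have hu0 : essSup u (volume.restrict (Ioc 0 t)) = 0 := by
            rcases ENNReal.rpow_eq_zero_iff.1 h with ⟨h', _⟩ | ⟨_, hlt⟩
            · exact h'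
            · linarith
          have huf : (fun τ => u τ * f τ) =ᵐ[volume.restrict (Ioc (0:ℝ) t)] 0 := by
            filter_upwards [ENNReal.essSup_eq_zero_iff.1 hu0] with τ hτ
            simp [hτ]
          have hS0 : S t = 0 := ENNReal.essSup_eq_zero_iff.2 huf
          rw [hS0, ENNReal.zero_rpow_of_pos hq, zero_mul]
        · rw [h, mul_zero]
      have hz : (∫⁻ t in Ioi (0:ℝ), S t ^ q * w t) = 0 := by
        rw [lintegral_congr_ae hzero, lintegral_zero]
      rw [hz, ENNReal.zero_rpow_of_pos (by positivity)]
      exact zero_le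
    -- now c ≠ 0
    set g : ℝ → ℝ≥0∞ := fun τ => f τ ^ p with hgdef
    have hgm : Measurable g := hf.pow measurable_const
    have hganti : AntitoneOn g (Ioi (0:ℝ)) := fun a ha b hb hab =>
      ENNReal.rpow_le_rpow (hfa ha hb hab) hp.le
    set I := ∫⁻ t in Ioi (0:ℝ), g t * v t with hI
    by_cases hIinf : I = ⊤
    · -- right-hand side is infinite
      rw [hIinf, ENNReal.top_rpow_of_pos (by positivity), ENNReal.mul_top
        (mul_ne_zero (ENNReal.rpow_pos (by norm_num) (by norm_num)).ne' hc0)]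
      exact le_top
    have gfin : ∀ r : ℝ, 0 < r → g r ≠ ⊤ := by
      intro r hr htop
      apply hIinf
      have hge : ∀ t ∈ Ioc (0:ℝ) r, (⊤:ℝ≥0∞) * v t ≤ g t * v t := by
        intro t ht
        have hgt : g t = ⊤ := by
          have h1 : g r ≤ g t := hganti (mem_Ioi.2 ht.1) (mem_Ioi.2 hr) ht.2
          rw [htop] at h1
          exact top_le_iff.1 h1
        rw [hgt]
      have h1 : (∫⁻ t in Ioc (0:ℝ) r, (⊤:ℝ≥0∞) * v t) ≤ ∫⁻ t in Ioc (0:ℝ) r, g t * v t :=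
        setLIntegral_mono (hgm.mul hv) hge
      rw [lintegral_const_mul _ hv, ENNReal.top_mul (hV r hr).1.ne'] at h1
      have h2 : (∫⁻ t in Ioc (0:ℝ) r, g t * v t) ≤ I := lintegral_mono_set Ioc_subset_Ioi_self
      exact top_le_iff.1 (h1.trans h2)
    set L : ℝ≥0∞ := ⨅ k : ℕ, g ((k:ℝ) + 1) with hL
    have hLfin : L ≠ ⊤ := by
      refine ne_top_of_le_ne_top (gfin 1 one_pos) ?_
      have := iInf_le (fun k : ℕ => g ((k:ℝ) + 1)) 0
      simpa using this
    have hLle : ∀ τ : ℝ, 0 < τ → L ≤ g τ := by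
      intro τ hτ
      obtain ⟨k, hk⟩ := exists_nat_ge τ
      exact le_trans (iInf_le _ k)
        (hganti (mem_Ioi.2 hτ) (mem_Ioi.2 (by positivity)) (by linarith))
    set hn : ℕ → ℝ → ℝ≥0∞ :=
      fun n s => (ENNReal.ofReal (1 / ((n:ℝ) + 1)))⁻¹ * (g s - g (s + 1 / ((n:ℝ) + 1))) with hhn
    have hhnm : ∀ n, Measurable (hn n) := fun n =>
      measurable_const.mul (hgm.sub (hgm.comp (measurable_add_const _)))
    have hεpos : ∀ n : ℕ, (0:ℝ) < 1 / ((n:ℝ) + 1) := fun n => by positivity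
    have hTlow : ∀ (n : ℕ) (τ : ℝ), 0 < τ →
        g (τ + 1 / ((n:ℝ) + 1)) ≤ (∫⁻ s in Ioi τ, hn n s) + L :=
      fun n τ hτ => tail_lower hgm hganti gfin (hεpos n) hτ
    have hTup : ∀ (n : ℕ) (τ : ℝ), 0 < τ → (∫⁻ s in Ioi τ, hn n s) ≤ g τ :=
      fun n τ hτ => tail_upper hgm hganti gfin (hεpos n) hτ
    have hhnV : ∀ n, (∫⁻ t in Ioi (0:ℝ), hn n t * ∫⁻ s in Ioc 0 t, v s) ≤ I := by
      intro n
      rw [← tonelli_VT v (hn n) hv (hhnm n)]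
      refine setLIntegral_mono (hgm.mul hv) fun t ht => ?_
      calc v t * ∫⁻ s in Ioi t, hn n s ≤ v t * g t := mul_le_mul_right (hTup n t ht) _
        _ = g t * v t := mul_comm _ _
    -- the per-n reduced bound
    have hAn : ∀ n, (∫⁻ t in Ioi (0:ℝ),
        (essSup (fun τ => u τ ^ p * ∫⁻ s in Ioi τ, hn n s)
          (volume.restrict (Ioc 0 t))) ^ (q/p) * w t) ≤ (c ^ p * I) ^ (q/p) := by
      intro n
      have h1 := hRed (hn n) (hhnm n)
      have h3 := h1.trans (mul_le_mul_right (hhnV n) (c ^ p))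
      have h4 : ((∫⁻ t in Ioi (0:ℝ),
          (essSup (fun τ => u τ ^ p * ∫⁻ s in Ioi τ, hn n s)
            (volume.restrict (Ioc 0 t))) ^ (q/p) * w t) ^ (p/q)) ^ (q/p) ≤ (c ^ p * I) ^ (q/p) :=
        ENNReal.rpow_le_rpow h3 (by positivity)
      rwa [← ENNReal.rpow_mul, div_mul_div_comm, mul_comm p q, div_self
        (by positivity : q * p ≠ 0), ENNReal.rpow_one] at h4
    -- auxiliary essSup functions of t
    set A : ℕ → ℝ → ℝ≥0∞ := fun n t =>
      essSup (fun τ => u τ ^ p * (g (τ + 1 / ((n:ℝ) + 1)) - L)) (volume.restrict (Ioc 0 t)) with hA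
    set B : ℝ → ℝ≥0∞ := fun t => essSup u (volume.restrict (Ioc 0 t)) with hB
    have hAmeas : ∀ n, Measurable (A n) := fun n => (monotone_essSup_Ioc _).measurable
    have hBmeas : Measurable B := (monotone_essSup_Ioc u).measurable
    have hAmono : ∀ t, Monotone fun n => A n t := by
      intro t n m hnm
      refine essSup_mono_ae ((ae_restrict_iff' measurableSet_Ioc).2 (ae_of_all _ fun τ hτ => ?_))
      refine mul_le_mul_right (tsub_le_tsub_right ?_ L) _
      refine hganti (mem_Ioi.2 (by linarith [hτ.1, hεpos m])) (mem_Ioi.2 (by linarith [hτ.1, hεpos n])) ?_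
      have h1 : (1:ℝ) / ((m:ℝ) + 1) ≤ 1 / ((n:ℝ) + 1) := by
        apply one_div_le_one_div_of_le (by positivity)
        have := (Nat.cast_le (α := ℝ)).2 hnm
        linarith
      linarith
    have hAleT : ∀ (n : ℕ) (t : ℝ), A n t ≤
        essSup (fun τ => u τ ^ p * ∫⁻ s in Ioi τ, hn n s) (volume.restrict (Ioc 0 t)) := by
      intro n t
      refine essSup_mono_ae ((ae_restrict_iff' measurableSet_Ioc).2 (ae_of_all _ fun τ hτ => ?_))
      exact mul_le_mul_right (tsub_le_iff_right.2 (hTlow n τ hτ.1)) _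
    -- the pointwise essSup estimate
    have hclaim : ∀ t : ℝ, S t ^ p ≤ (⨆ n, A n t) + L * B t ^ p := by
      intro t
      have hSp : S t ^ p = essSup (fun τ => u τ ^ p * g τ) (volume.restrict (Ioc 0 t)) := by
        rw [hS, ← essSup_rpow (volume.restrict (Ioc 0 t)) (fun τ => u τ * f τ) hp]
        congr 1
        funext τ
        rw [ENNReal.mul_rpow_of_nonneg _ _ hp.le]
      rw [hSp]
      have hae : ∀ᵐ τ ∂(volume.restrict (Ioc (0:ℝ) t)),
          u τ ^ p * g τ ≤ (⨆ n : ℕ, u τ ^ p * (g (τ + 1 / ((n:ℝ) + 1)) - L)) + u τ ^ p * L := by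
        have h1 : ∀ᵐ τ ∂(volume.restrict (Ioc (0:ℝ) t)),
            τ ∉ {τ : ℝ | 0 < τ ∧ (⨆ n : ℕ, g (τ + 1 / ((n:ℝ) + 1))) < g τ} :=
          ae_restrict_of_ae ((countable_bad hganti).ae_notMem _)
        have h2 : ∀ᵐ τ ∂(volume.restrict (Ioc (0:ℝ) t)), τ ∈ Ioc (0:ℝ) t :=
          ae_restrict_mem measurableSet_Ioc
        filter_upwards [h1, h2] with τ hτD hτmem
        have hτpos : (0:ℝ) < τ := hτmem.1
        have hg_le : g τ ≤ ⨆ n : ℕ, g (τ + 1 / ((n:ℝ) + 1)) := by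
          by_contra hcon
          exact hτD ⟨hτpos, not_le.1 hcon⟩
        calc u τ ^ p * g τ ≤ u τ ^ p * ⨆ n : ℕ, g (τ + 1 / ((n:ℝ) + 1)) :=
              mul_le_mul_right hg_le _
          _ ≤ u τ ^ p * ((⨆ n : ℕ, (g (τ + 1 / ((n:ℝ) + 1)) - L)) + L) := by
              refine mul_le_mul_right (iSup_le fun n => ?_) _
              exact le_trans le_tsub_add (add_le_add
                (le_iSup (fun n : ℕ => g (τ + 1 / ((n:ℝ) + 1)) - L) n) le_rfl)
          _ = (⨆ n : ℕ, u τ ^ p * (g (τ + 1 / ((n:ℝ) + 1)) - L)) + u τ ^ p * L := by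
              rw [mul_add, ENNReal.mul_iSup]
      calc essSup (fun τ => u τ ^ p * g τ) (volume.restrict (Ioc 0 t))
          ≤ essSup (fun τ => (⨆ n : ℕ, u τ ^ p * (g (τ + 1 / ((n:ℝ) + 1)) - L)) + u τ ^ p * L)
              (volume.restrict (Ioc 0 t)) := essSup_mono_ae hae
        _ ≤ essSup (fun τ => ⨆ n : ℕ, u τ ^ p * (g (τ + 1 / ((n:ℝ) + 1)) - L))
              (volume.restrict (Ioc 0 t))
            + essSup (fun τ => u τ ^ p * L) (volume.restrict (Ioc 0 t)) :=
            essSup_add_le _ _ _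
        _ ≤ (⨆ n, A n t) + essSup (fun τ => u τ ^ p * L) (volume.restrict (Ioc 0 t)) :=
            add_le_add (essSup_iSup_le _ _) le_rfl
        _ ≤ (⨆ n, A n t) + L * B t ^ p := by
            refine add_le_add le_rfl ?_
            have hcomm : (fun τ => u τ ^ p * L) = fun τ => L * u τ ^ p := by
              funext τ; rw [mul_comm]
            rw [hcomm, ENNReal.essSup_const_mul, hB,
              ← essSup_rpow (volume.restrict (Ioc 0 t)) u hp]
    -- integrate
    have hint1 : (∫⁻ t in Ioi (0:ℝ), S t ^ q * w t)
        ≤ ∫⁻ t in Ioi (0:ℝ), ((⨆ n, A n t) + L * B t ^ p) ^ (q/p) * w t := by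
      refine lintegral_mono fun t => ?_
      have h1 : S t ^ q = (S t ^ p) ^ (q/p) := by
        rw [← ENNReal.rpow_mul]
        congr 1
        field_simp
      rw [h1]
      exact mul_le_mul_left (ENNReal.rpow_le_rpow (hclaim t) (by positivity)) _
    set E2 := ∫⁻ t in Ioi (0:ℝ), (⨆ n, A n t) ^ (q/p) * w t with hE2def
    set E3 := ∫⁻ t in Ioi (0:ℝ), (L * B t ^ p) ^ (q/p) * w t with hE3def
    have hint2 : (∫⁻ t in Ioi (0:ℝ), ((⨆ n, A n t) + L * B t ^ p) ^ (q/p) * w t)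
        ≤ 2 ^ (q/p) * (E2 + E3) := by
      have hpt : ∀ t, ((⨆ n, A n t) + L * B t ^ p) ^ (q/p) * w t
          ≤ 2 ^ (q/p) * ((⨆ n, A n t) ^ (q/p) * w t + (L * B t ^ p) ^ (q/p) * w t) := by
        intro t
        calc ((⨆ n, A n t) + L * B t ^ p) ^ (q/p) * w t
            ≤ (2 ^ (q/p) * ((⨆ n, A n t) ^ (q/p) + (L * B t ^ p) ^ (q/p))) * w t :=
              mul_le_mul_left (rpow_add_le _ _ (by positivity)) _
          _ = 2 ^ (q/p) * ((⨆ n, A n t) ^ (q/p) * w t + (L * B t ^ p) ^ (q/p) * w t) := by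
              ring
      calc (∫⁻ t in Ioi (0:ℝ), ((⨆ n, A n t) + L * B t ^ p) ^ (q/p) * w t)
          ≤ ∫⁻ t in Ioi (0:ℝ),
              2 ^ (q/p) * ((⨆ n, A n t) ^ (q/p) * w t + (L * B t ^ p) ^ (q/p) * w t) :=
            lintegral_mono hpt
        _ = 2 ^ (q/p) * ∫⁻ t in Ioi (0:ℝ),
              ((⨆ n, A n t) ^ (q/p) * w t + (L * B t ^ p) ^ (q/p) * w t) :=
            lintegral_const_mul' _ _ (ENNReal.rpow_ne_top_of_nonneg (by positivity) (by norm_num))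
        _ = 2 ^ (q/p) * (E2 + E3) := by
            congr 1
            exact lintegral_add_left
              (((Measurable.iSup hAmeas).pow measurable_const).mul hw) _
    have hBq : (∫⁻ t in Ioi (0:ℝ), B t ^ q * w t)
        ≤ (c * (∫⁻ t in Ioi (0:ℝ), v t) ^ (1/p)) ^ q := by
      calc (∫⁻ t in Ioi (0:ℝ), B t ^ q * w t)
          = ((∫⁻ t in Ioi (0:ℝ), B t ^ q * w t) ^ (1/q)) ^ q := by
            rw [← ENNReal.rpow_mul, one_div, inv_mul_cancel₀ hq0, ENNReal.rpow_one]
        _ ≤ (c * (∫⁻ t in Ioi (0:ℝ), v t) ^ (1/p)) ^ q := ENNReal.rpow_le_rpow hOne hq.le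
    have hLvI : L * ∫⁻ t in Ioi (0:ℝ), v t ≤ I := by
      rw [← lintegral_const_mul _ hv]
      exact setLIntegral_mono (hgm.mul hv) fun t ht => mul_le_mul_left (hLle t ht) _
    have hE3 : E3 ≤ c ^ q * I ^ (q/p) := by
      have hrw : ∀ t : ℝ, (L * B t ^ p) ^ (q/p) * w t = L ^ (q/p) * (B t ^ q * w t) := by
        intro t
        rw [ENNReal.mul_rpow_of_nonneg _ _ (by positivity), ← ENNReal.rpow_mul,
          mul_div_cancel₀ q hp0, mul_assoc]
      calc E3 = ∫⁻ t in Ioi (0:ℝ), L ^ (q/p) * (B t ^ q * w t) := lintegral_congr hrw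
        _ = L ^ (q/p) * ∫⁻ t in Ioi (0:ℝ), B t ^ q * w t :=
            lintegral_const_mul' _ _ (ENNReal.rpow_ne_top_of_nonneg (by positivity) hLfin)
        _ ≤ L ^ (q/p) * (c * (∫⁻ t in Ioi (0:ℝ), v t) ^ (1/p)) ^ q :=
            mul_le_mul_right hBq _
        _ = c ^ q * (L * ∫⁻ t in Ioi (0:ℝ), v t) ^ (q/p) := by
            rw [ENNReal.mul_rpow_of_nonneg c _ hq.le,
              ENNReal.mul_rpow_of_nonneg L _ (by positivity), ← ENNReal.rpow_mul]
            rw [show (1/p) * q = q/p by field_simp]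
            ring
        _ ≤ c ^ q * I ^ (q/p) :=
            mul_le_mul_right (ENNReal.rpow_le_rpow hLvI (by positivity)) _
    have hE2 : E2 ≤ c ^ q * I ^ (q/p) := by
      have hrw : ∀ t : ℝ, (⨆ n, A n t) ^ (q/p) * w t = ⨆ n, (A n t) ^ (q/p) * w t := by
        intro t
        rw [iSup_rpow _ (by positivity), ENNReal.iSup_mul]
      have hmono : Monotone fun n : ℕ => fun t => (A n t) ^ (q/p) * w t := by
        intro n m hnm t
        exact mul_le_mul_left (ENNReal.rpow_le_rpow (hAmono t hnm) (by positivity)) _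
      calc E2 = ∫⁻ t in Ioi (0:ℝ), ⨆ n, (A n t) ^ (q/p) * w t := lintegral_congr hrw
        _ = ⨆ n, ∫⁻ t in Ioi (0:ℝ), (A n t) ^ (q/p) * w t :=
            lintegral_iSup (fun n => ((hAmeas n).pow measurable_const).mul hw) hmono
        _ ≤ c ^ q * I ^ (q/p) := by
            refine iSup_le fun n => ?_
            calc (∫⁻ t in Ioi (0:ℝ), (A n t) ^ (q/p) * w t)
                ≤ ∫⁻ t in Ioi (0:ℝ),
                    (essSup (fun τ => u τ ^ p * ∫⁻ s in Ioi τ, hn n s)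
                      (volume.restrict (Ioc 0 t))) ^ (q/p) * w t :=
                  lintegral_mono fun t => mul_le_mul_left
                    (ENNReal.rpow_le_rpow (hAleT n t) (by positivity)) _
              _ ≤ (c ^ p * I) ^ (q/p) := hAn n
              _ = c ^ q * I ^ (q/p) := by
                  rw [ENNReal.mul_rpow_of_nonneg _ _ (by positivity), ← ENNReal.rpow_mul,
                    mul_div_cancel₀ q hp0]
    -- put everything together
    have htotal : (∫⁻ t in Ioi (0:ℝ), S t ^ q * w t)
        ≤ 2 ^ (q/p + 1) * (c ^ q * I ^ (q/p)) := by
      calc (∫⁻ t in Ioi (0:ℝ), S t ^ q * w t)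
          ≤ 2 ^ (q/p) * (E2 + E3) := hint1.trans hint2
        _ ≤ 2 ^ (q/p) * (c ^ q * I ^ (q/p) + c ^ q * I ^ (q/p)) :=
            mul_le_mul_right (add_le_add hE2 hE3) _
        _ = 2 ^ (q/p + 1) * (c ^ q * I ^ (q/p)) := by
            rw [ENNReal.rpow_add _ _ (by norm_num) (by norm_num), ENNReal.rpow_one]
            ring
    calc (∫⁻ t in Ioi (0:ℝ), S t ^ q * w t) ^ (1/q)
        ≤ (2 ^ (q/p + 1) * (c ^ q * I ^ (q/p))) ^ (1/q) :=
          ENNReal.rpow_le_rpow htotal (by positivity)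
      _ = 2 ^ (1/p + 1/q) * c * I ^ (1/p) := by
          rw [ENNReal.mul_rpow_of_nonneg _ _ (by positivity),
            ENNReal.mul_rpow_of_nonneg _ _ (by positivity),
            ← ENNReal.rpow_mul, ← ENNReal.rpow_mul, ← ENNReal.rpow_mul]
          rw [show (q/p + 1) * (1/q) = 1/p + 1/q by field_simp]
          rw [show q * (1/q) = 1 by field_simp]
          rw [show (q/p) * (1/q) = 1/p by field_simp]
          rw [ENNReal.rpow_one]
          ring
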